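/- Let p ≥ 3 be a prime, Π a finite projective plane of order p², and c a code word of C(Π)^⊥ of weight w(c) = 2p² − 2p + 2 + ε with 1 ≤ ε ≤ p − 2. Then the number of colours of c (i.e., the number of distinct nonzero values attained by c) is even. -/

import Mathlib

/-- A projective plane of order `n`, given by an abstract incidence relation `R`. -/
structure IsProjectivePlaneOrder {P L : Type*} (n : ℕ) (R : P → L → Prop) : Prop where
  existsUnique_line : ∀ x y : P, x ≠ y → ∃! l : L, R x l ∧ R y l
  existsUnique_point : ∀ l m : L, l ≠ m → ∃! x : P, R x l ∧ R x m
  quadrangle : ∃ a b c d : P, a ≠ b ∧ a ≠ c ∧ a ≠ d ∧ b ≠ c ∧ b ≠ d ∧ c ≠ d ∧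
    ∀ l : L, ¬(R a l ∧ R b l ∧ R c l) ∧ ¬(R a l ∧ R b l ∧ R d l) ∧
      ¬(R a l ∧ R c l ∧ R d l) ∧ ¬(R b l ∧ R c l ∧ R d l)
  line_card : ∀ l : L, {x | R x l}.ncard = n + 1
  point_card : ∀ x : P, {l | R x l}.ncard = n + 1

/-- A code word of the dual code `C(Π)^⊥`: a function from points to `F_p` summing
to zero on every line. -/
def IsDualCodeWord {P L : Type*} (p : ℕ) (R : P → L → Prop) (c : P → ZMod p) : Prop :=
  ∀ l : L, ∑ᶠ x ∈ {y : P | R y l}, c x = 0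

lemma even_card_of_invol {α : Type*} [DecidableEq α] (f : α → α) (s : Finset α)
    (h1 : ∀ a ∈ s, f a ∈ s) (h2 : ∀ a ∈ s, f (f a) = a) (h3 : ∀ a ∈ s, f a ≠ a) :
    Even s.card := by
  induction s using Finset.strongInduction with
  | _ s ih =>
    rcases s.eq_empty_or_nonempty with rfl | ⟨a, ha⟩
    · simp
    · have hfa := h1 a ha
      have hne := h3 a ha
      have hsub : ({a, f a} : Finset α) ⊆ s := by
        intro x hx
        simp only [Finset.mem_insert, Finset.mem_singleton] at hx
        rcases hx with rfl | rfl
        · exact ha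
        · exact hfa
      have h2le : 2 ≤ s.card := by
        have := Finset.card_le_card hsub
        rwa [Finset.card_pair (Ne.symm hne)] at this
      have hts : s \ {a, f a} ⊂ s := Finset.sdiff_ssubset hsub ⟨a, by simp⟩
      have hcard : s.card = (s \ {a, f a}).card + 2 := by
        rw [Finset.card_sdiff_of_subset hsub, Finset.card_pair (Ne.symm hne)]
        omega
      have hmem : ∀ x ∈ s \ {a, f a}, x ∈ s ∧ x ≠ a ∧ x ≠ f a := by
        intro x hx
        simp only [Finset.mem_sdiff, Finset.mem_insert, Finset.mem_singleton] at hx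
        tauto
      have he := ih (s \ {a, f a}) hts
        (by
          intro x hx
          obtain ⟨hxs, hxa, hxfa⟩ := hmem x hx
          simp only [Finset.mem_sdiff, Finset.mem_insert, Finset.mem_singleton]
          refine ⟨h1 x hxs, ?_⟩
          rintro (h | h)
          · exact hxfa (by rw [← h2 x hxs, h])
          · exact hxa (by rw [← h2 x hxs, h, h2 a ha]))
        (fun x hx => h2 x (hmem x hx).1)
        (fun x hx => h3 x (hmem x hx).1)
      rw [hcard]
      exact he.add (by decide)

/-- Through every support point of a short enough dual code word there is a line
meeting the support in exactly one other point, whose value is the negative. -/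
lemma exists_neg_value {Pt Ln : Type} [Finite Pt] [Finite Ln]
    (p : ℕ) (R : Pt → Ln → Prop) (hPP : IsProjectivePlaneOrder (p ^ 2) R)
    (c : Pt → ZMod p) (hc : IsDualCodeWord p R c)
    (hwle : (Function.support c).ncard ≤ 2 * p ^ 2 + 2)
    (P : Pt) (hP : c P ≠ 0) : ∃ Q : Pt, c Q = - c P := by
  classical
  cases nonempty_fintype Pt
  cases nonempty_fintype Ln
  set LF : Finset Ln := {l : Ln | R P l}.toFinset with hLF
  have hLFcard : LF.card = p ^ 2 + 1 := by
    rw [hLF, ← Set.ncard_eq_toFinset_card']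
    exact hPP.point_card P
  have hsum : ∀ l : Ln, ∑ x ∈ ({y : Pt | R y l}).toFinset, c x = 0 := by
    intro l
    have := hc l
    rwa [← Set.coe_toFinset {y : Pt | R y l}, finsum_mem_coe_finset] at this
  set T : Finset Pt := (Function.support c).toFinset.erase P with hT
  have hPmem : P ∈ (Function.support c).toFinset := by
    simp [Function.mem_support, hP]
  have hTmem : ∀ Q, Q ∈ T ↔ Q ≠ P ∧ c Q ≠ 0 := by
    intro Q
    simp [hT, Function.mem_support]
  have hTcard : T.card + 1 = (Function.support c).toFinset.card := by
    rw [hT, Finset.card_erase_of_mem hPmem]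
    exact Nat.sub_add_cancel (Finset.card_pos.mpr ⟨P, hPmem⟩)
  have hTlt : T.card < 2 * LF.card := by
    have := Set.ncard_eq_toFinset_card' (Function.support c)
    rw [hLFcard]
    omega
  haveI : Nonempty Ln := by
    have : LF.Nonempty := Finset.card_pos.mp (by omega)
    exact ⟨this.choose⟩
  set φ : Pt → Ln := fun Q =>
    if h : Q ≠ P then (hPP.existsUnique_line P Q (Ne.symm h)).exists.choose
    else Classical.arbitrary Ln with hφdef
  have hφ : ∀ Q, Q ≠ P → R P (φ Q) ∧ R Q (φ Q) := by
    intro Q h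
    simp only [hφdef, dif_pos h]
    exact (hPP.existsUnique_line P Q (Ne.symm h)).exists.choose_spec
  have hφuniq : ∀ Q, Q ≠ P → ∀ l, R P l → R Q l → φ Q = l := by
    intro Q h l h1 h2
    exact ((hPP.existsUnique_line P Q (Ne.symm h)).unique (hφ Q h) ⟨h1, h2⟩)
  have hmap : ∀ Q ∈ T, φ Q ∈ LF := by
    intro Q hQ
    rw [hLF, Set.mem_toFinset]
    exact ((hφ Q ((hTmem Q).mp hQ).1).1 : _)
  have hfib : ∀ l ∈ LF, ∃ Q ∈ T, φ Q = l := by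
    intro l hl
    have hRP : R P l := by rwa [hLF, Set.mem_toFinset] at hl
    have : ∃ Q, R Q l ∧ Q ≠ P ∧ c Q ≠ 0 := by
      by_contra h
      push_neg at h
      have h0 : ∑ x ∈ ({y : Pt | R y l}).toFinset, c x = c P := by
        apply Finset.sum_eq_single P
        · intro b hb hbP
          exact h b ((Set.mem_toFinset (s := {y : Pt | R y l})).mp hb) hbP
        · intro hPl
          exact absurd ((Set.mem_toFinset (s := {y : Pt | R y l})).mpr hRP) hPl
      rw [hsum l] at h0
      exact hP h0.symm
    obtain ⟨Q, hQl, hQP, hQ0⟩ := this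
    exact ⟨Q, (hTmem Q).mpr ⟨hQP, hQ0⟩, hφuniq Q hQP l hRP hQl⟩
  have hfibcard := Finset.card_eq_sum_card_fiberwise hmap
  have hone : ∃ l ∈ LF, (T.filter (fun Q => φ Q = l)).card = 1 := by
    by_contra h
    push_neg at h
    have h2 : ∀ l ∈ LF, 2 ≤ (T.filter (fun Q => φ Q = l)).card := by
      intro l hl
      obtain ⟨Q, hQ, hQl⟩ := hfib l hl
      have hpos : 0 < (T.filter (fun Q => φ Q = l)).card :=
        Finset.card_pos.mpr ⟨Q, Finset.mem_filter.mpr ⟨hQ, hQl⟩⟩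
      have := h l hl
      omega
    have := Finset.card_nsmul_le_sum LF (fun l => (T.filter (fun Q => φ Q = l)).card) 2 h2
    rw [← hfibcard] at this
    simp only [smul_eq_mul] at this
    omega
  obtain ⟨l, hl, hcard1⟩ := hone
  obtain ⟨Q, hQeq⟩ := Finset.card_eq_one.mp hcard1
  have hQmem : Q ∈ T ∧ φ Q = l := by
    have : Q ∈ T.filter (fun Q => φ Q = l) := by rw [hQeq]; exact Finset.mem_singleton_self Q
    exact Finset.mem_filter.mp this
  obtain ⟨hQT, hQl⟩ := hQmem
  obtain ⟨hQP, hQ0⟩ := (hTmem Q).mp hQT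
  have hRPl : R P l := by rwa [hLF, Set.mem_toFinset] at hl
  have hRQl : R Q l := hQl ▸ (hφ Q hQP).2
  have hsub : ({P, Q} : Finset Pt) ⊆ ({y : Pt | R y l}).toFinset := by
    intro x hx
    simp only [Finset.mem_insert, Finset.mem_singleton] at hx
    rcases hx with rfl | rfl
    · exact (Set.mem_toFinset (s := {y : Pt | R y l})).mpr hRPl
    · exact (Set.mem_toFinset (s := {y : Pt | R y l})).mpr hRQl
  have hzero : ∀ x ∈ ({y : Pt | R y l}).toFinset, x ∉ ({P, Q} : Finset Pt) → c x = 0 := by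
    intro x hxl hx
    simp only [Finset.mem_insert, Finset.mem_singleton, not_or] at hx
    obtain ⟨hxP, hxQ⟩ := hx
    by_contra hx0
    have hxT : x ∈ T := (hTmem x).mpr ⟨hxP, hx0⟩
    have hxφ : φ x = l := hφuniq x hxP l hRPl ((Set.mem_toFinset (s := {y : Pt | R y l})).mp hxl)
    have : x ∈ T.filter (fun Q => φ Q = l) := Finset.mem_filter.mpr ⟨hxT, hxφ⟩
    rw [hQeq, Finset.mem_singleton] at this
    exact hxQ this
  have hps : ∑ x ∈ ({P, Q} : Finset Pt), c x = 0 := by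
    rw [Finset.sum_subset hsub hzero, hsum l]
  rw [Finset.sum_pair (Ne.symm hQP)] at hps
  exact ⟨Q, eq_neg_of_add_eq_zero_right hps⟩

/-- The number of distinct nonzero values of a code word of weight
`2p² - 2p + 2 + ε`, `1 ≤ ε ≤ p - 2`, is even. -/
theorem card_colours_even {Pt Ln : Type} [Finite Pt] [Finite Ln]
    (p : ℕ) (hp : p.Prime) (hp3 : 3 ≤ p)
    (R : Pt → Ln → Prop) (hPP : IsProjectivePlaneOrder (p ^ 2) R)
    (c : Pt → ZMod p) (hc : IsDualCodeWord p R c)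
    (ε : ℕ) (hε1 : 1 ≤ ε) (hε2 : ε ≤ p - 2)
    (hw : (Function.support c).ncard = 2 * p ^ 2 - 2 * p + 2 + ε) :
    Even ((Set.range c \ {0}).ncard) := by
  classical
  haveI : Fact p.Prime := ⟨hp⟩
  have hwle : (Function.support c).ncard ≤ 2 * p ^ 2 + 2 := by
    have hpp : p ≤ p ^ 2 := Nat.le_self_pow two_ne_zero p
    omega
  have key := exists_neg_value p R hPP c hc hwle
  have hfin : (Set.range c \ {0}).Finite := (Set.finite_range c).diff
  rw [Set.ncard_eq_toFinset_card _ hfin]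
  apply even_card_of_invol (fun x => -x)
  · intro a ha
    rw [Set.Finite.mem_toFinset, Set.mem_diff, Set.mem_singleton_iff] at ha ⊢
    obtain ⟨⟨x, hx⟩, ha0⟩ := ha
    obtain ⟨Q, hQ⟩ := key x (by rw [hx]; exact ha0)
    rw [hx] at hQ
    exact ⟨⟨Q, hQ⟩, neg_ne_zero.mpr ha0⟩
  · intro a _
    exact neg_neg a
  · intro a ha
    rw [Set.Finite.mem_toFinset, Set.mem_diff, Set.mem_singleton_iff] at ha
    intro h
    have h2 : (2 : ZMod p) * a = 0 := by
      rw [two_mul]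
      nth_rewrite 1 [← h]
      exact neg_add_cancel a
    have h2ne : (2 : ZMod p) ≠ 0 := by
      intro h0
      have : ((2 : ℕ) : ZMod p) = 0 := by exact_mod_cast h0
      rw [ZMod.natCast_eq_zero_iff] at this
      have := Nat.le_of_dvd (by norm_num) this
      omega
    exact ha.2 ((mul_eq_zero.mp h2).resolve_left h2ne)
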